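/- Let P̄ ∈ ℝ^{(r+q)×(r+q)} be symmetric, E ∈ ℝ^{r×r} symmetric positive definite, M ∈ ℝ^{ν×ν} symmetric positive definite, N₁ ∈ ℝ^{r×ν} and N₂ ∈ ℝ^{q×ν}. Define L := [[I_r, N₁],[0, N₂]] ∈ ℝ^{(r+q)×(r+ν)} (block matrix with rows (I_r, N₁) and (0, N₂)). If P̄ + L · blkdiag(−E, M⁻¹) · Lᵀ ≺ 0, then for every Δ ∈ ℝ^{r×q} satisfying [I_r, Δ] · P̄ · [I_r, Δ]ᵀ ⪰ 0, it holds that (N₁ + Δ N₂) M⁻¹ (N₁ + Δ N₂)ᵀ ≺ E. -/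

import Mathlib

open Matrix

lemma congr_posDef {m n : Type*} [Fintype m] [Fintype n] {A : Matrix n n ℝ} (hA : A.PosDef)
    (B : Matrix m n ℝ) (hB : ∀ x : m → ℝ, x ≠ 0 → Bᵀ *ᵥ x ≠ 0) :
    (B * A * Bᵀ).PosDef := by
  refine Matrix.PosDef.of_dotProduct_mulVec_pos ?_ (fun x hx => ?_)
  · have := (hA.posSemidef.mul_mul_conjTranspose_same B).1
    simpa using this
  · have h := hA.dotProduct_mulVec_pos (hB x hx)
    have hrw : star x ⬝ᵥ (B * A * Bᵀ) *ᵥ x = star (Bᵀ *ᵥ x) ⬝ᵥ A *ᵥ (Bᵀ *ᵥ x) := by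
      simp only [star_trivial, ← mulVec_mulVec, dotProduct_mulVec, mulVec_transpose]
    rw [hrw]
    exact h

set_option maxHeartbeats 1000000 in
/-- Full-block S-procedure instance used in the proof of Theorem 1. -/
theorem stmt4
    (r q ν : ℕ)
    (Pbar : Matrix (Fin r ⊕ Fin q) (Fin r ⊕ Fin q) ℝ) (hPbar : Pbar.IsSymm)
    (E : Matrix (Fin r) (Fin r) ℝ) (hE : E.PosDef)
    (M : Matrix (Fin ν) (Fin ν) ℝ) (hM : M.PosDef)
    (N₁ : Matrix (Fin r) (Fin ν) ℝ) (N₂ : Matrix (Fin q) (Fin ν) ℝ)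
    (hLMI : (-(Pbar + (Matrix.fromBlocks (1 : Matrix (Fin r) (Fin r) ℝ) N₁ 0 N₂) * (Matrix.fromBlocks (-E) 0 0 M⁻¹) *
        (Matrix.fromBlocks (1 : Matrix (Fin r) (Fin r) ℝ) N₁ 0 N₂)ᵀ)).PosDef) :
    ∀ Δ : Matrix (Fin r) (Fin q) ℝ,
      ((fromCols (1 : Matrix (Fin r) (Fin r) ℝ) Δ) * Pbar * (fromCols (1 : Matrix (Fin r) (Fin r) ℝ) Δ)ᵀ).PosSemidef →
      (E - (N₁ + Δ * N₂) * M⁻¹ * (N₁ + Δ * N₂)ᵀ).PosDef := by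
  intro Δ hΔ
  set S := fromCols (1 : Matrix (Fin r) (Fin r) ℝ) Δ with hS
  set L := fromBlocks (1 : Matrix (Fin r) (Fin r) ℝ) N₁ 0 N₂ with hL
  set D := fromBlocks (-E) (0 : Matrix (Fin r) (Fin ν) ℝ) (0 : Matrix (Fin ν) (Fin r) ℝ) M⁻¹ with hD
  set K := N₁ + Δ * N₂ with hK
  have hSinj : ∀ x : Fin r → ℝ, x ≠ 0 → Sᵀ *ᵥ x ≠ 0 := by
    intro x hx hcon
    rw [hS, transpose_fromCols, fromRows_mulVec] at hcon
    apply hx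
    have := congrFun hcon
    funext i
    simpa using this (Sum.inl i)
  have h1 : (S * (-(Pbar + L * D * Lᵀ)) * Sᵀ).PosDef := congr_posDef hLMI S hSinj
  have hSL : S * L = fromCols 1 K := by
    rw [hS, hL, fromCols_mul_fromBlocks]
    simp [hK]
  have hSLD : S * L * D * (S * L)ᵀ = -E + K * M⁻¹ * Kᵀ := by
    rw [hSL, hD, transpose_fromCols, fromCols_mul_fromBlocks,
      fromCols_mul_fromRows]
    simp [Matrix.mul_assoc]
  have hsum : E - K * M⁻¹ * Kᵀ =
      S * (-(Pbar + L * D * Lᵀ)) * Sᵀ + S * Pbar * Sᵀ := by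
    have expand : S * (-(Pbar + L * D * Lᵀ)) * Sᵀ
        = -(S * Pbar * Sᵀ) - S * L * D * (S * L)ᵀ := by
      simp only [Matrix.neg_mul, Matrix.mul_neg, Matrix.add_mul, Matrix.mul_add,
        Matrix.transpose_mul, Matrix.mul_assoc]
      abel
    rw [expand, hSLD]
    abel
  rw [hsum]
  exact h1.add_posSemidef hΔ
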